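/- Let r > 1, let J be a quantum annulus unitary on a complex Hilbert space H with ‖J‖ = ‖J⁻¹‖ = r, and let A, B be bounded operators (not necessarily commuting) on a complex Hilbert space L. Then the operator C = A ⊗ J + B ⊗ (J*)⁻¹ on the Hilbert space tensor product L ⊗ H is unitary if and only if the following four conditions hold: (i) A*A = B*B; (ii) A*B + B*A + (r² + r⁻²)·A*A = I; (iii) AA* = BB*; and (iv) AB* + BA* + (r² + r⁻²)·AA* = I. -/

import Mathlib

open ContinuousLinearMap

theorem myaux_vec_zero {K : Type*} [NormedAddCommGroup K] [InnerProductSpace ℂ K]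
    [CompleteSpace K] (s : Set K) (hd : Dense (Submodule.span ℂ s : Set K)) (w : K)
    (h : ∀ v ∈ s, (inner ℂ w v : ℂ) = 0) : w = 0 := by
  have hw : w ∈ (Submodule.span ℂ s)ᗮ := by
    rw [Submodule.mem_orthogonal']
    intro u hu
    induction hu using Submodule.span_induction with
    | mem x hx => exact h x hx
    | zero => simp
    | add x y _ _ hx hy => rw [inner_add_right, hx, hy, add_zero]
    | smul c x _ hx => rw [inner_smul_right, hx, mul_zero]
  have htop : (Submodule.span ℂ s).topologicalClosure = ⊤ :=
    Submodule.dense_iff_topologicalClosure_eq_top.mp hd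
  have hbot : (Submodule.span ℂ s)ᗮ = ⊥ :=
    Submodule.topologicalClosure_eq_top_iff.mp htop
  rw [hbot] at hw
  simpa using hw

theorem myaux_op_zero {E : Type*} [NormedAddCommGroup E] [InnerProductSpace ℂ E]
    (P : E →L[ℂ] E) (h : ∀ x x' : E, (inner ℂ x (P x') : ℂ) = 0) : P = 0 := by
  ext x'
  refine ext_inner_left ℂ fun v => ?_
  simp [h v x']

theorem myaux_opK_zero {K : Type*} [NormedAddCommGroup K] [InnerProductSpace ℂ K]
    [CompleteSpace K] (s : Set K) (hd : Dense (Submodule.span ℂ s : Set K)) (T : K →L[ℂ] K)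
    (h : ∀ u ∈ s, ∀ v ∈ s, (inner ℂ (T u) v : ℂ) = 0) : T = 0 := by
  have h1 : ∀ u ∈ s, T u = 0 := fun u hu => myaux_vec_zero s hd (T u) (h u hu)
  have h2 : ∀ u ∈ Submodule.span ℂ s, T u = 0 := by
    intro u hu
    induction hu using Submodule.span_induction with
    | mem x hx => exact h1 x hx
    | zero => simp
    | add x y _ _ hx hy => rw [map_add, hx, hy, add_zero]
    | smul c x _ hx => rw [map_smul, hx, smul_zero]
  have heq : (⇑T : K → K) = (fun _ => 0) :=
    Continuous.ext_on hd T.continuous continuous_const fun u hu => h2 u hu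
  ext u
  simpa using congrFun heq u

theorem myaux_imm {E : Type*} [NormedAddCommGroup E] [InnerProductSpace ℂ E]
    [CompleteSpace E] (T S : E →L[ℂ] E) (x y : E) :
    (inner ℂ x ((adjoint T * S) y) : ℂ) = inner ℂ (T x) (S y) := by
  rw [ContinuousLinearMap.mul_apply, adjoint_inner_right]

theorem myaux_core {H L K : Type*}
    [NormedAddCommGroup H] [InnerProductSpace ℂ H] [CompleteSpace H]
    [NormedAddCommGroup L] [InnerProductSpace ℂ L] [CompleteSpace L]
    [NormedAddCommGroup K] [InnerProductSpace ℂ K] [CompleteSpace K]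
    (s : ℂ) (Jc Jic : H →L[ℂ] H) (A B : L →L[ℂ] L)
    (tensor : L →ₗ[ℂ] H →ₗ[ℂ] K)
    (htensor : ∀ (x x' : L) (y y' : H),
      (inner ℂ (tensor x y) (tensor x' y') : ℂ) = (inner ℂ x x' : ℂ) * (inner ℂ y y' : ℂ))
    (hdense : Dense (Submodule.span ℂ {k : K | ∃ x y, k = tensor x y} : Set K))
    (C : K →L[ℂ] K)
    (hC : ∀ x y, C (tensor x y) = tensor (A x) (Jc y) + tensor (B x) (Jic y))
    (h1 : adjoint Jc * Jic = 1)
    (h2 : adjoint Jic * Jc = 1)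
    (h3 : adjoint Jic * Jic + adjoint Jc * Jc = s • 1)
    (hsc : ∀ a b : ℂ, a • (adjoint Jc * Jc) + b • (1 : H →L[ℂ] H) = 0 → a = 0 ∧ b = 0) :
    (adjoint C * C = 1) ↔
      (adjoint A * A = adjoint B * B ∧
        adjoint A * B + adjoint B * A + s • (adjoint A * A) = 1) := by
  set M : H →L[ℂ] H := adjoint Jc * Jc with hMdef
  set P : L →L[ℂ] L := adjoint A * A - adjoint B * B with hPdef
  set R : L →L[ℂ] L := adjoint A * B + adjoint B * A + s • (adjoint B * B) - 1 with hRdef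
  have h4 : adjoint Jic * Jic = s • 1 - M := eq_sub_of_add_eq h3
  have hexp : ∀ (x x' : L) (y y' : H),
      (inner ℂ (C (tensor x y)) (C (tensor x' y')) : ℂ) - inner ℂ (tensor x y) (tensor x' y')
        = inner ℂ x (P x') * inner ℂ y (M y') + inner ℂ x (R x') * (inner ℂ y y' : ℂ) := by
    intro x x' y y'
    rw [hC, hC]
    rw [inner_add_left, inner_add_right, inner_add_right]
    rw [htensor, htensor, htensor, htensor, htensor]
    have e1 : (inner ℂ (A x) (A x') : ℂ) = inner ℂ x ((adjoint A * A) x') := (myaux_imm A A x x').symm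
    have e2 : (inner ℂ (A x) (B x') : ℂ) = inner ℂ x ((adjoint A * B) x') := (myaux_imm A B x x').symm
    have e3 : (inner ℂ (B x) (A x') : ℂ) = inner ℂ x ((adjoint B * A) x') := (myaux_imm B A x x').symm
    have e4 : (inner ℂ (B x) (B x') : ℂ) = inner ℂ x ((adjoint B * B) x') := (myaux_imm B B x x').symm
    have f1 : (inner ℂ (Jc y) (Jc y') : ℂ) = inner ℂ y (M y') := (myaux_imm Jc Jc y y').symm
    have f2 : (inner ℂ (Jc y) (Jic y') : ℂ) = inner ℂ y y' := by
      rw [← myaux_imm Jc Jic y y', h1, ContinuousLinearMap.one_apply]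
    have f3 : (inner ℂ (Jic y) (Jc y') : ℂ) = inner ℂ y y' := by
      rw [← myaux_imm Jic Jc y y', h2, ContinuousLinearMap.one_apply]
    have f4 : (inner ℂ (Jic y) (Jic y') : ℂ) = s * inner ℂ y y' - inner ℂ y (M y') := by
      rw [← myaux_imm Jic Jic y y', h4, ContinuousLinearMap.sub_apply,
        ContinuousLinearMap.smul_apply, ContinuousLinearMap.one_apply, inner_sub_right,
        inner_smul_right]
    rw [e1, e2, e3, e4, f1, f2, f3, f4]
    simp only [hPdef, hRdef, ContinuousLinearMap.sub_apply, ContinuousLinearMap.add_apply,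
      ContinuousLinearMap.smul_apply, ContinuousLinearMap.one_apply, inner_sub_right,
      inner_add_right, inner_smul_right]
    ring
  constructor
  · intro hCC
    have hzero : ∀ (x x' : L) (y y' : H),
        (inner ℂ x (P x') : ℂ) * inner ℂ y (M y') + inner ℂ x (R x') * (inner ℂ y y' : ℂ) = 0 := by
      intro x x' y y'
      rw [← hexp]
      have hin : (inner ℂ (C (tensor x y)) (C (tensor x' y')) : ℂ)
          = inner ℂ (tensor x y) (tensor x' y') := by
        have h5 := congrArg
          (fun T : K →L[ℂ] K => (inner ℂ ((tensor x) y) (T ((tensor x') y')) : ℂ)) hCC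
        simpa only [ContinuousLinearMap.mul_apply, adjoint_inner_right,
          ContinuousLinearMap.one_apply] using h5
      rw [hin, sub_self]
    have hPR : ∀ x x' : L, (inner ℂ x (P x') : ℂ) = 0 ∧ (inner ℂ x (R x') : ℂ) = 0 := by
      intro x x'
      refine hsc _ _ (myaux_op_zero _ fun y y' => ?_)
      simp only [ContinuousLinearMap.add_apply, ContinuousLinearMap.smul_apply,
        ContinuousLinearMap.one_apply, inner_add_right, inner_smul_right]
      exact hzero x x' y y'
    have hP : P = 0 := myaux_op_zero P fun x x' => (hPR x x').1
    have hR : R = 0 := myaux_op_zero R fun x x' => (hPR x x').2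
    have hi : adjoint A * A = adjoint B * B := by
      have := sub_eq_zero.mp hP
      exact this
    refine ⟨hi, ?_⟩
    have hii : adjoint A * B + adjoint B * A + s • (adjoint B * B) = 1 := sub_eq_zero.mp hR
    rw [hi]
    exact hii
  · rintro ⟨hi, hii⟩
    have hP : P = 0 := by rw [hPdef, hi, sub_self]
    have hR : R = 0 := by
      rw [hRdef, ← hi, hii, sub_self]
    rw [← sub_eq_zero]
    apply myaux_opK_zero _ hdense
    rintro u hu v hv
    obtain ⟨x, y, rfl⟩ := hu
    obtain ⟨x', y', rfl⟩ := hv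
    have h6 : (inner ℂ (((adjoint C * C - 1) : K →L[ℂ] K) ((tensor x) y)) ((tensor x') y') : ℂ)
        = inner ℂ (C ((tensor x) y)) (C ((tensor x') y'))
          - inner ℂ ((tensor x) y) ((tensor x') y') := by
      rw [ContinuousLinearMap.sub_apply, ContinuousLinearMap.mul_apply,
        ContinuousLinearMap.one_apply, inner_sub_left, adjoint_inner_left]
    rw [h6, hexp, hP, hR]
    simp
open ContinuousLinearMap

theorem myaux_adj_mul {E : Type*} [NormedAddCommGroup E] [InnerProductSpace ℂ E]
    [CompleteSpace E] (X Y : E →L[ℂ] E) : adjoint (X * Y) = adjoint Y * adjoint X := by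
  rw [← star_eq_adjoint, star_mul, star_eq_adjoint, star_eq_adjoint]

theorem myaux_adj_one {E : Type*} [NormedAddCommGroup E] [InnerProductSpace ℂ E]
    [CompleteSpace E] : adjoint (1 : E →L[ℂ] E) = 1 := by
  rw [← star_eq_adjoint, star_one]

theorem myaux_norm_adj {E : Type*} [NormedAddCommGroup E] [InnerProductSpace ℂ E]
    [CompleteSpace E] (X : E →L[ℂ] E) : ‖adjoint X‖ = ‖X‖ :=
  adjoint.norm_map X

theorem myaux_norm_sq {E : Type*} [NormedAddCommGroup E] [InnerProductSpace ℂ E]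
    [CompleteSpace E] (X : E →L[ℂ] E) : ‖adjoint X * X‖ = ‖X‖ * ‖X‖ := by
  rw [ContinuousLinearMap.mul_def]
  exact norm_adjoint_comp_self X

theorem myaux_scalar {H : Type*} [NormedAddCommGroup H] [InnerProductSpace ℂ H]
    [CompleteSpace H] [Nontrivial H] (r : ℝ) (hr : 1 < r) (M : H →L[ℂ] H)
    (hsa : adjoint M = M) (hMn : ‖M‖ = r ^ 2)
    (hNn : ‖((r ^ 2 + r⁻¹ ^ 2 : ℝ) : ℂ) • (1 : H →L[ℂ] H) - M‖ = r ^ 2) :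
    ∀ a b : ℂ, a • M + b • (1 : H →L[ℂ] H) = 0 → a = 0 ∧ b = 0 := by
  intro a b hab
  have hr0 : (0 : ℝ) < r := lt_trans one_pos hr
  obtain ⟨x0, hx0⟩ := exists_ne (0 : H)
  have hone : ∀ c d : ℂ, c • (1 : H →L[ℂ] H) = d • 1 → c = d := by
    intro c d h
    have h2 := congrArg (fun T : H →L[ℂ] H => T x0) h
    simp only [ContinuousLinearMap.smul_apply, ContinuousLinearMap.one_apply] at h2
    have h3 : (c - d) • x0 = 0 := by rw [sub_smul, h2, sub_self]
    rcases smul_eq_zero.mp h3 with h4 | h4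
    · exact sub_eq_zero.mp h4
    · exact absurd h4 hx0
  have hnorm1 : ‖(1 : H →L[ℂ] H)‖ = 1 := norm_one
  have ha : a = 0 := by
    by_contra han
    have h1 : a • M = (-b) • (1 : H →L[ℂ] H) := by
      rw [eq_neg_of_add_eq_zero_left hab, neg_smul]
    obtain ⟨c, hM⟩ : ∃ c : ℂ, M = c • (1 : H →L[ℂ] H) := by
      refine ⟨a⁻¹ * (-b), ?_⟩
      rw [← smul_smul, ← h1, smul_smul, inv_mul_cancel₀ han, one_smul]
    have hadj : adjoint M = (starRingEnd ℂ) c • (1 : H →L[ℂ] H) := by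
      rw [hM, ← star_eq_adjoint, star_smul, star_one]
      rfl
    have hcc : (starRingEnd ℂ) c • (1 : H →L[ℂ] H) = c • 1 := by
      rw [← hadj, hsa, hM]
    have hcreal : (starRingEnd ℂ) c = c := hone _ _ hcc
    have hc : (c.re : ℂ) = c := Complex.conj_eq_iff_re.mp hcreal
    have hn1 : |c.re| = r ^ 2 := by
      rw [← hMn, hM, norm_smul, hnorm1, mul_one, ← hc, Complex.norm_real,
        Real.norm_eq_abs, Complex.ofReal_re]
    have hsub : ((r ^ 2 + r⁻¹ ^ 2 : ℝ) : ℂ) • (1 : H →L[ℂ] H) - M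
        = (((r ^ 2 + r⁻¹ ^ 2 - c.re : ℝ)) : ℂ) • 1 := by
      rw [hM, ← hc, ← sub_smul]
      congr 1
      push_cast [Complex.ofReal_re]
      ring
    have hn2 : |r ^ 2 + r⁻¹ ^ 2 - c.re| = r ^ 2 := by
      rw [hsub, norm_smul, hnorm1, mul_one, Complex.norm_real, Real.norm_eq_abs] at hNn
      exact hNn
    have hinv2 : r⁻¹ ^ 2 * r ^ 2 = 1 := by
      field_simp
    have hp1 : (0 : ℝ) < r ^ 2 := pow_pos hr0 2
    have hp2 : (0 : ℝ) < r⁻¹ ^ 2 := pow_pos (inv_pos.mpr hr0) 2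
    have hr2 : 1 < r ^ 2 := by nlinarith
    rcases (abs_eq (le_of_lt hp1)).mp hn1 with h5 | h5
    · rw [h5] at hn2
      have he : r ^ 2 + r⁻¹ ^ 2 - r ^ 2 = r⁻¹ ^ 2 := by ring
      rw [he, abs_of_pos hp2] at hn2
      rw [hn2] at hinv2
      nlinarith [hr2]
    · rw [h5] at hn2
      have he : r ^ 2 + r⁻¹ ^ 2 - -r ^ 2 = 2 * r ^ 2 + r⁻¹ ^ 2 := by ring
      rw [he, abs_of_pos (by linarith)] at hn2
      linarith
  refine ⟨ha, ?_⟩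
  rw [ha, zero_smul, zero_add] at hab
  exact hone b 0 (by rw [hab, zero_smul])

set_option maxHeartbeats 1000000

open ContinuousLinearMap in
/-- Let `J` be a quantum annulus unitary on a complex Hilbert space `H` with
`‖J‖ = ‖J⁻¹‖ = r`, and let `A, B` be bounded operators on a complex Hilbert space `L`.
Let `K` together with the bilinear map `tensor` (with `⟪x⊗y, x'⊗y'⟫ = ⟪x,x'⟫⟪y,y'⟫` and dense
span of elementary tensors) be the Hilbert space tensor product `L ⊗ H`, and let
`C = A ⊗ J + B ⊗ (J*)⁻¹`.  Then `C` is unitary (`C*C = CC* = I`) if and only if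
(i) `A*A = B*B`, (ii) `A*B + B*A + (r²+r⁻²)·A*A = I`, (iii) `AA* = BB*`, and
(iv) `AB* + BA* + (r²+r⁻²)·AA* = I`. -/
theorem tensor_unitary_iff
    {H L K : Type*}
    [NormedAddCommGroup H] [InnerProductSpace ℂ H] [CompleteSpace H]
    [NormedAddCommGroup L] [InnerProductSpace ℂ L] [CompleteSpace L]
    [NormedAddCommGroup K] [InnerProductSpace ℂ K] [CompleteSpace K]
    (r : ℝ) (hr : 1 < r) (J : (H →L[ℂ] H)ˣ)
    (hJ : adjoint (J : H →L[ℂ] H) * (J : H →L[ℂ] H) +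
        ((J⁻¹ : (H →L[ℂ] H)ˣ) : H →L[ℂ] H) *
          adjoint ((J⁻¹ : (H →L[ℂ] H)ˣ) : H →L[ℂ] H) =
      ((r ^ 2 + r⁻¹ ^ 2 : ℝ) : ℂ) • (1 : H →L[ℂ] H))
    (hJnorm : ‖(J : H →L[ℂ] H)‖ = r)
    (hJinvnorm : ‖((J⁻¹ : (H →L[ℂ] H)ˣ) : H →L[ℂ] H)‖ = r)
    (A B : L →L[ℂ] L)
    (tensor : L →ₗ[ℂ] H →ₗ[ℂ] K)
    (htensor : ∀ (x x' : L) (y y' : H),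
      (inner ℂ (tensor x y) (tensor x' y') : ℂ) = (inner ℂ x x' : ℂ) * (inner ℂ y y' : ℂ))
    (hdense : Dense (Submodule.span ℂ {k : K | ∃ x y, k = tensor x y} : Set K))
    (C : K →L[ℂ] K)
    (hC : ∀ (x : L) (y : H),
      C (tensor x y) =
        tensor (A x) ((J : H →L[ℂ] H) y) +
          tensor (B x) (adjoint ((J⁻¹ : (H →L[ℂ] H)ˣ) : H →L[ℂ] H) y)) :
    (adjoint C * C = 1 ∧ C * adjoint C = 1) ↔
      (adjoint A * A = adjoint B * B ∧
        adjoint A * B + adjoint B * A +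
          ((r ^ 2 + r⁻¹ ^ 2 : ℝ) : ℂ) • (adjoint A * A) = 1 ∧
        A * adjoint A = B * adjoint B ∧
        A * adjoint B + B * adjoint A +
          ((r ^ 2 + r⁻¹ ^ 2 : ℝ) : ℂ) • (A * adjoint A) = 1) := by
  set Jc : H →L[ℂ] H := (J : H →L[ℂ] H) with hJcdef
  set Jinv : H →L[ℂ] H := ((J⁻¹ : (H →L[ℂ] H)ˣ) : H →L[ℂ] H) with hJinvdef
  set s : ℂ := ((r ^ 2 + r⁻¹ ^ 2 : ℝ) : ℂ) with hsdef
  have hr0 : (0 : ℝ) < r := lt_trans one_pos hr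
  have hmulinv : Jc * Jinv = 1 := J.mul_inv
  have hinvmul : Jinv * Jc = 1 := J.inv_mul
  -- H is nontrivial
  haveI hHnt : Nontrivial H := by
    by_contra hn
    rw [not_nontrivial_iff_subsingleton] at hn
    have hz : Jc = 0 := by ext x; exact Subsingleton.elim _ _
    rw [hz, norm_zero] at hJnorm
    linarith
  -- the derived `J J* + (J J*)⁻¹ = s` identity
  have l1 : Jc * (adjoint Jc * Jc) * Jinv = Jc * adjoint Jc := by
    rw [mul_assoc, mul_assoc, hmulinv, mul_one]
  have l2 : Jc * (Jinv * adjoint Jinv) * Jinv = adjoint Jinv * Jinv := by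
    rw [← mul_assoc, hmulinv, one_mul]
  have l3 : Jc * (s • (1 : H →L[ℂ] H)) * Jinv = s • 1 := by
    rw [mul_smul_comm, mul_one, smul_mul_assoc, hmulinv]
  have h3' : adjoint Jinv * Jinv + Jc * adjoint Jc = s • 1 := by
    have h := congrArg (fun X : H →L[ℂ] H => Jc * X * Jinv) hJ
    simp only [mul_add, add_mul] at h
    rw [l1, l2, l3] at h
    rw [add_comm]
    exact h
  -- scalar independence for J* J
  have hsc1 : ∀ a b : ℂ, a • (adjoint Jc * Jc) + b • (1 : H →L[ℂ] H) = 0 → a = 0 ∧ b = 0 := by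
    have hsa1 : adjoint (adjoint Jc * Jc) = adjoint Jc * Jc := by
      rw [myaux_adj_mul, adjoint_adjoint]
    have hMn1 : ‖adjoint Jc * Jc‖ = r ^ 2 := by
      rw [myaux_norm_sq, hJnorm]; ring
    have hNn1 : ‖s • (1 : H →L[ℂ] H) - adjoint Jc * Jc‖ = r ^ 2 := by
      rw [← (eq_sub_of_add_eq' hJ)]
      have hy : Jinv * adjoint Jinv = adjoint (adjoint Jinv) * adjoint Jinv := by
        rw [adjoint_adjoint]
      rw [hy, myaux_norm_sq, myaux_norm_adj, hJinvnorm]; ring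
    exact myaux_scalar r hr (adjoint Jc * Jc) hsa1 hMn1 hNn1
  -- scalar independence for J J*
  have hsc2 : ∀ a b : ℂ, a • (Jc * adjoint Jc) + b • (1 : H →L[ℂ] H) = 0 → a = 0 ∧ b = 0 := by
    have hsa2 : adjoint (Jc * adjoint Jc) = Jc * adjoint Jc := by
      rw [myaux_adj_mul, adjoint_adjoint]
    have hMn2 : ‖Jc * adjoint Jc‖ = r ^ 2 := by
      have hy : Jc * adjoint Jc = adjoint (adjoint Jc) * adjoint Jc := by
        rw [adjoint_adjoint]
      rw [hy, myaux_norm_sq, myaux_norm_adj, hJnorm]; ring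
    have hNn2 : ‖s • (1 : H →L[ℂ] H) - Jc * adjoint Jc‖ = r ^ 2 := by
      rw [← (eq_sub_of_add_eq h3'), myaux_norm_sq, hJinvnorm]; ring
    exact myaux_scalar r hr (Jc * adjoint Jc) hsa2 hMn2 hNn2
  -- hypotheses for the first application of the core lemma
  have h1a : adjoint Jc * adjoint Jinv = 1 := by
    rw [← myaux_adj_mul Jinv Jc, hinvmul, myaux_adj_one]
  have h2a : adjoint (adjoint Jinv) * Jc = 1 := by
    rw [adjoint_adjoint]; exact hinvmul
  have h3a : adjoint (adjoint Jinv) * adjoint Jinv + adjoint Jc * Jc = s • 1 := by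
    rw [adjoint_adjoint, add_comm]; exact hJ
  have core1 := myaux_core s Jc (adjoint Jinv) A B tensor htensor hdense C hC h1a h2a h3a hsc1
  -- formula for the adjoint of `C` on elementary tensors
  have hCadj : ∀ (x : L) (y : H),
      adjoint C (tensor x y)
        = tensor (adjoint A x) (adjoint Jc y) + tensor (adjoint B x) (Jinv y) := by
    intro x y
    rw [← sub_eq_zero]
    apply myaux_vec_zero _ hdense
    rintro v hv
    obtain ⟨x', y', rfl⟩ := hv
    rw [inner_sub_left, inner_add_left, htensor, htensor, adjoint_inner_left, hC,
      inner_add_right, htensor, htensor, adjoint_inner_left, adjoint_inner_left,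
      adjoint_inner_left, ← adjoint_inner_right]
    ring
  -- hypotheses for the second application of the core lemma
  have h1b : adjoint (adjoint Jc) * Jinv = 1 := by
    rw [adjoint_adjoint]; exact hmulinv
  have h2b : adjoint Jinv * adjoint Jc = 1 := by
    rw [← myaux_adj_mul Jc Jinv, hmulinv, myaux_adj_one]
  have h3b : adjoint Jinv * Jinv + adjoint (adjoint Jc) * adjoint Jc = s • 1 := by
    rw [adjoint_adjoint]; exact h3'
  have hsc2' : ∀ a b : ℂ,
      a • (adjoint (adjoint Jc) * adjoint Jc) + b • (1 : H →L[ℂ] H) = 0 → a = 0 ∧ b = 0 := by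
    intro a b hab
    rw [adjoint_adjoint] at hab
    exact hsc2 a b hab
  have core2 := myaux_core s (adjoint Jc) Jinv (adjoint A) (adjoint B) tensor htensor hdense
    (adjoint C) hCadj h1b h2b h3b hsc2'
  simp only [adjoint_adjoint] at core2
  constructor
  · rintro ⟨u1, u2⟩
    obtain ⟨i1, i2⟩ := core1.mp u1
    obtain ⟨i3, i4⟩ := core2.mp u2
    exact ⟨i1, i2, i3, i4⟩
  · rintro ⟨i1, i2, i3, i4⟩
    exact ⟨core1.mpr ⟨i1, i2⟩, core2.mpr ⟨i3, i4⟩⟩
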